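/- For every (α, β + ix) ∈ 𝒢, the pair h(α, β + ix) = (α₁, α₂) satisfies the defining conditions of the period domain Gr^{po}_{2,2}: α₁² = 0, α₂² = 0, α₁·α₂ = 0, α₁·(conjugate of α₁) > 0, and α₂·(conjugate of α₂) > 0. -/

import Mathlib

/- Context: `V` is a finite-dimensional real vector space with a nondegenerate symmetric
bilinear form `B` of signature `(3, dim V − 3)`.  We model the complexification `V_ℂ`
by pairs `(a, b) : V × V` representing `a + i·b`. -/

noncomputable section

/-- The ℂ-bilinear extension of `B` to `V × V`, where `(a, b)` represents `a + i·b`. -/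
def Bc {V : Type*} [AddCommGroup V] [Module ℝ V] (B : LinearMap.BilinForm ℝ V)
    (y z : V × V) : ℂ :=
  ⟨B y.1 z.1 - B y.2 z.2, B y.1 z.2 + B y.2 z.1⟩

/-- The inclusion of `V` into its complexification `V × V`. -/
def toC {V : Type*} [AddCommGroup V] (z : V) : V × V := (z, 0)

/-- Complex conjugation on the complexification `V × V`. -/
def conjC {V : Type*} [AddCommGroup V] (y : V × V) : V × V := (y.1, -y.2)

/-- Scalar multiplication by a complex number on the complexification `V × V`. -/
def cSMul {V : Type*} [AddCommGroup V] [Module ℝ V] (s : ℂ) (y : V × V) : V × V :=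
  (s.re • y.1 - s.im • y.2, s.im • y.1 + s.re • y.2)

/-- The (symmetric, nondegenerate) form `B` has signature `(3, dim V − 3)`: `V` splits as an
orthogonal direct sum of a 3-dimensional positive definite subspace and a negative definite
complement. -/
def IsSigThree {V : Type*} [AddCommGroup V] [Module ℝ V] (B : LinearMap.BilinForm ℝ V) : Prop :=
  ∃ P N : Submodule ℝ V, IsCompl P N ∧ Module.finrank ℝ P = 3 ∧
    (∀ x ∈ P, ∀ y ∈ N, B x y = 0) ∧
    (∀ x ∈ P, x ≠ 0 → 0 < B x x) ∧ (∀ y ∈ N, y ≠ 0 → B y y < 0)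

/-- The period domain `𝒢`: pairs `(α, β + i·x)` with `α² = 0`, `α·ᾱ > 0`, `α·x = 0`, `x² > 0`.
A point is `p = (α, (β, x))` where `α : V × V` is a complexified vector and `β, x ∈ V`. -/
def periodDomain {V : Type*} [AddCommGroup V] [Module ℝ V] (B : LinearMap.BilinForm ℝ V) :
    Set ((V × V) × (V × V)) :=
  {p | Bc B p.1 p.1 = 0 ∧ 0 < (Bc B p.1 (conjC p.1)).re ∧
       Bc B p.1 (toC p.2.2) = 0 ∧ 0 < B p.2.2 p.2.2}

/- Enlargement `V̂ = V ⊕ ℝw ⊕ ℝw*` of `V` by a hyperbolic plane `U(n)`: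
we model `V̂` as `V × ℝ × ℝ` with `w = (0, 1, 0)` and `w* = (0, 0, 1)`. -/

/-- The bilinear form of `V̂`: it restricts to `B` on `V`, satisfies `w² = (w*)² = 0`,
`w·w* = n`, and `w, w*` are orthogonal to `V`. -/
def Bhat {V : Type*} [AddCommGroup V] [Module ℝ V] (B : LinearMap.BilinForm ℝ V) (n : ℝ) :
    LinearMap.BilinForm ℝ (V × ℝ × ℝ) :=
  LinearMap.mk₂ ℝ (fun y z => B y.1 z.1 + n * (y.2.1 * z.2.2 + y.2.2 * z.2.1))
    (fun m₁ m₂ z => by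
      simp only [Prod.fst_add, Prod.snd_add, map_add, LinearMap.add_apply]; ring)
    (fun c m z => by
      simp only [Prod.smul_fst, Prod.smul_snd, map_smul, LinearMap.smul_apply,
        smul_eq_mul]; ring)
    (fun m z₁ z₂ => by
      simp only [Prod.fst_add, Prod.snd_add, map_add, LinearMap.add_apply]; ring)
    (fun c m z => by
      simp only [Prod.smul_fst, Prod.smul_snd, map_smul, LinearMap.smul_apply,
        smul_eq_mul]; ring)

/-- The basis vector `w` of the added hyperbolic plane. -/
def wHat (V : Type*) [AddCommGroup V] : V × ℝ × ℝ := (0, 1, 0)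

/-- The basis vector `w*` of the added hyperbolic plane. -/
def wsHat (V : Type*) [AddCommGroup V] : V × ℝ × ℝ := (0, 0, 1)

/-- The ℂ-linear embedding of the complexification of `V` into that of `V̂`. -/
def jC {V : Type*} [AddCommGroup V] (y : V × V) : (V × ℝ × ℝ) × (V × ℝ × ℝ) :=
  ((y.1, 0, 0), (y.2, 0, 0))

/-- The map `h(α, β + ix) = (√n·α − (α·β)·w, √n·β + ½(x² − β²)·w + w* + i(√n·x − (x·β)·w))`
from `𝒢` into the complexification of `V̂`. -/
def hmap {V : Type*} [AddCommGroup V] [Module ℝ V] (B : LinearMap.BilinForm ℝ V) (n : ℝ)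
    (p : (V × V) × (V × V)) : ((V × ℝ × ℝ) × (V × ℝ × ℝ)) × ((V × ℝ × ℝ) × (V × ℝ × ℝ)) :=
  (Real.sqrt n • jC p.1 - cSMul (Bc B p.1 (toC p.2.1)) (toC (wHat V)),
   (Real.sqrt n • (p.2.1, (0 : ℝ), (0 : ℝ)) +
      ((B p.2.2 p.2.2 - B p.2.1 p.2.1) / 2) • wHat V + wsHat V,
    Real.sqrt n • (p.2.2, (0 : ℝ), (0 : ℝ)) - (B p.2.2 p.2.1) • wHat V))


lemma Bhat_apply {V : Type*} [AddCommGroup V] [Module ℝ V] (B : LinearMap.BilinForm ℝ V)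
    (n : ℝ) (v1 v2 : V) (s1 t1 s2 t2 : ℝ) :
    Bhat B n (v1, s1, t1) (v2, s2, t2) = B v1 v2 + n * (s1 * t2 + t1 * s2) := rfl

/-- For every `(α, β + ix) ∈ 𝒢`, the pair `h(α, β + ix) = (α₁, α₂)`
satisfies the defining conditions of the period domain `Gr^{po}_{2,2}`:
`α₁² = 0`, `α₂² = 0`, `α₁·α₂ = 0`, `α₁·ᾱ₁ > 0`, `α₂·ᾱ₂ > 0`. -/
theorem statement6 {V : Type*} [NormedAddCommGroup V] [NormedSpace ℝ V] [FiniteDimensional ℝ V]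
    (B : LinearMap.BilinForm ℝ V)
    (hsymm : ∀ x y : V, B x y = B y x)
    (hnd : ∀ x : V, (∀ y : V, B x y = 0) → x = 0)
    (hsig : IsSigThree B)
    (n : ℕ) (hn : 0 < n)
    (p : (V × V) × (V × V)) (hp : p ∈ periodDomain B) :
    Bc (Bhat B n) (hmap B n p).1 (hmap B n p).1 = 0 ∧
    Bc (Bhat B n) (hmap B n p).2 (hmap B n p).2 = 0 ∧
    Bc (Bhat B n) (hmap B n p).1 (hmap B n p).2 = 0 ∧
    0 < (Bc (Bhat B n) (hmap B n p).1 (conjC (hmap B n p).1)).re ∧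
    0 < (Bc (Bhat B n) (hmap B n p).2 (conjC (hmap B n p).2)).re := by

  obtain ⟨⟨a, b⟩, ⟨β, x⟩⟩ := p
  obtain ⟨h1, h2, h3, h4⟩ := hp
  simp only [Bc, toC, conjC, Complex.ext_iff, Complex.zero_re, Complex.zero_im,
    map_zero, LinearMap.zero_apply, map_neg, LinearMap.neg_apply, sub_zero, add_zero,
    zero_add, neg_neg, mul_zero, zero_mul, neg_zero] at h1 h2 h3
  obtain ⟨h1a, h1b⟩ := h1
  obtain ⟨h3a, h3b⟩ := h3
  have hs : Real.sqrt n * Real.sqrt n = (n : ℝ) := Real.mul_self_sqrt (by positivity)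
  have hnpos : (0:ℝ) < n := by exact_mod_cast hn
  set s := Real.sqrt n with hsdef
  have e1 : (hmap B n ((a, b), (β, x))).1
      = ((s • a, -(B a β), (0:ℝ)), (s • b, -(B b β), (0:ℝ))) := by
    simp [hmap, jC, cSMul, toC, wHat, Bc, Prod.ext_iff]
    exact ⟨rfl, rfl⟩
  have e2 : (hmap B n ((a, b), (β, x))).2
      = ((s • β, (B x x - B β β) / 2, (1:ℝ)), (s • x, -(B x β), (0:ℝ))) := by
    simp [hmap, wHat, wsHat, Prod.ext_iff]
    exact ⟨rfl, rfl⟩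
  rw [e1, e2]
  simp only [Bc, conjC, Prod.fst, Prod.snd, Prod.mk.injEq, Prod.neg_mk, neg_neg, neg_zero,
    Bhat_apply, map_smul, map_neg, LinearMap.smul_apply, LinearMap.neg_apply,
    smul_eq_mul, Complex.ext_iff, Complex.zero_re, Complex.zero_im]
  have hba := hsymm a b
  have hbx := hsymm β x
  have hs2 : ∀ t : ℝ, s * (s * t) = n * t := fun t => by rw [← mul_assoc, hs]
  dsimp only at h4
  simp only [hs2]
  have h2' : (0:ℝ) < B a a + B b b := by linarith
  refine ⟨⟨by linear_combination (n:ℝ) * h1a, by linear_combination (n:ℝ) * h1b⟩,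
    ⟨by ring, by linear_combination (n:ℝ) * hbx⟩,
    ⟨by linear_combination (-(n:ℝ)) * h3b, by linear_combination (n:ℝ) * h3a⟩,
    by nlinarith [mul_pos hnpos h2'], by nlinarith [mul_pos hnpos h4]⟩
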